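/- arXiv:2307.11949 — 3 statements merged into one kernel-verified Lean document; each statement's English description precedes it below -/
import Mathlib

section
/- Under the same 1-D noisy-value model with g = s + T, T > 1, and subgoal step k with 1 \le k \le T, the probability that the high-level policy errs, P[\hat{V}(s+k, g) \le \hat{V}(s-k, g)], equals \Phi(-\sqrt{2}/(\sigma\sqrt{(T/k)^2+1})). -/
open MeasureTheory ProbabilityTheory Real Set

noncomputable def Phi (x : ℝ) : ℝ := ProbabilityTheory.cdf (ProbabilityTheory.gaussianReal 0 1) x

lemma integrable_rexp_quadratic' {b : ℝ} (hb : b < 0) (c d : ℝ) :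
    Integrable fun x : ℝ => Real.exp (b * x ^ 2 + c * x + d) := by
  have hb' : b ≠ 0 := ne_of_lt hb
  have h : ∀ x : ℝ, b * x ^ 2 + c * x + d
      = -(-b) * (x + c / (2 * b)) ^ 2 + (d - c ^ 2 / (4 * b)) := by
    intro x; field_simp; ring
  simp_rw [h, Real.exp_add]
  exact ((integrable_exp_neg_mul_sq (neg_pos.mpr hb)).comp_add_right (c / (2 * b))).mul_const _

lemma integral_rexp_quadratic' {b : ℝ} (hb : b < 0) (c d : ℝ) :
    ∫ x : ℝ, Real.exp (b * x ^ 2 + c * x + d)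
      = Real.sqrt (π / -b) * Real.exp (d - c ^ 2 / (4 * b)) := by
  have hb' : b ≠ 0 := ne_of_lt hb
  have h : ∀ x : ℝ, b * x ^ 2 + c * x + d
      = -(-b) * (x + c / (2 * b)) ^ 2 + (d - c ^ 2 / (4 * b)) := by
    intro x; field_simp; ring
  simp_rw [h, Real.exp_add, integral_mul_const]
  rw [integral_add_right_eq_self (fun x => Real.exp (-(-b) * x ^ 2)) (c / (2 * b)),
    integral_gaussian]

lemma gaussianPDFReal_conv_pt {v₁ v₂ : NNReal} (h₁ : v₁ ≠ 0) (h₂ : v₂ ≠ 0) (y x : ℝ) :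
    gaussianPDFReal 0 v₁ x * gaussianPDFReal 0 v₂ (y - x)
      = ((Real.sqrt (2 * π * v₁))⁻¹ * (Real.sqrt (2 * π * v₂))⁻¹)
        * Real.exp ((-((v₁ + v₂ : ℝ) / (2 * v₁ * v₂))) * x ^ 2 + (y / v₂) * x
            + (-(y ^ 2) / (2 * v₂))) := by
  have hv₁ : (0 : ℝ) < v₁ := by positivity
  have hv₂ : (0 : ℝ) < v₂ := by positivity
  simp only [gaussianPDFReal, sub_zero]
  rw [mul_mul_mul_comm, ← Real.exp_add]
  congr 1
  field_simp
  ring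

lemma gaussianPDFReal_conv {v₁ v₂ : NNReal} (h₁ : v₁ ≠ 0) (h₂ : v₂ ≠ 0) (y : ℝ) :
    ∫ x : ℝ, gaussianPDFReal 0 v₁ x * gaussianPDFReal 0 v₂ (y - x)
      = gaussianPDFReal 0 (v₁ + v₂) y := by
  have hv₁ : (0 : ℝ) < v₁ := by positivity
  have hv₂ : (0 : ℝ) < v₂ := by positivity
  have hb : (-((v₁ + v₂ : ℝ) / (2 * v₁ * v₂))) < 0 := neg_lt_zero.mpr (by positivity)
  simp_rw [gaussianPDFReal_conv_pt h₁ h₂ y]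
  rw [integral_const_mul, integral_rexp_quadratic' hb]
  simp only [gaussianPDFReal, sub_zero]
  rw [← mul_assoc]
  congr 1
  · rw [← Real.sqrt_inv, ← Real.sqrt_inv, ← Real.sqrt_mul (by positivity),
      ← Real.sqrt_mul (by positivity), ← Real.sqrt_inv]
    congr 1
    have hπ : (0:ℝ) < π := Real.pi_pos
    push_cast
    field_simp
  · congr 1
    have hne : ((v₁ : ℝ) + v₂) ≠ 0 := by positivity
    have hd : (4 * -(((v₁ : ℝ) + v₂) / (2 * v₁ * v₂))) ≠ 0 := by
      rw [mul_neg]; exact neg_ne_zero.mpr (by positivity)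
    have hbeq : (y / (v₂ : ℝ)) ^ 2 / (4 * -(((v₁ : ℝ) + v₂) / (2 * v₁ * v₂)))
        = -(y ^ 2 * v₁ / (2 * v₂ * ((v₁ : ℝ) + v₂))) := by
      rw [div_eq_iff hd]
      field_simp
      ring
    rw [hbeq]
    push_cast
    field_simp
    ring

lemma gaussianPDF_conv {v₁ v₂ : NNReal} (h₁ : v₁ ≠ 0) (h₂ : v₂ ≠ 0) (y : ℝ) :
    ∫⁻ x : ℝ, gaussianPDF 0 v₁ x * gaussianPDF 0 v₂ (y - x)
      = gaussianPDF 0 (v₁ + v₂) y := by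
  have hv₁ : (0 : ℝ) < v₁ := by positivity
  have hv₂ : (0 : ℝ) < v₂ := by positivity
  have hb : (-((v₁ + v₂ : ℝ) / (2 * v₁ * v₂))) < 0 := neg_lt_zero.mpr (by positivity)
  have hint : Integrable fun x : ℝ =>
      gaussianPDFReal 0 v₁ x * gaussianPDFReal 0 v₂ (y - x) := by
    have := (integrable_rexp_quadratic' hb (y / v₂) (-(y ^ 2) / (2 * v₂))).const_mul
      ((Real.sqrt (2 * π * v₁))⁻¹ * (Real.sqrt (2 * π * v₂))⁻¹)
    exact this.congr (by
      filter_upwards with x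
      rw [gaussianPDFReal_conv_pt h₁ h₂ y x])
  simp only [gaussianPDF]
  simp_rw [← ENNReal.ofReal_mul (gaussianPDFReal_nonneg 0 v₁ _)]
  rw [← MeasureTheory.ofReal_integral_eq_lintegral_ofReal hint
    (ae_of_all _ fun x => mul_nonneg (gaussianPDFReal_nonneg 0 v₁ x)
      (gaussianPDFReal_nonneg 0 v₂ (y - x))),
    gaussianPDFReal_conv h₁ h₂ y]

lemma gaussianReal_prod_add (v₁ v₂ : NNReal) :
    Measure.map (fun p : ℝ × ℝ => p.1 + p.2)
      ((gaussianReal 0 v₁).prod (gaussianReal 0 v₂)) = gaussianReal 0 (v₁ + v₂) := by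
  rcases eq_or_ne v₁ 0 with rfl | h₁
  · rw [gaussianReal_zero_var, Measure.dirac_prod,
      Measure.map_map (by fun_prop) (by fun_prop)]
    simp [Function.comp_def, Measure.map_id]
  rcases eq_or_ne v₂ 0 with rfl | h₂
  · rw [gaussianReal_zero_var, Measure.prod_dirac,
      Measure.map_map (by fun_prop) (by fun_prop)]
    simp [Function.comp_def, Measure.map_id]
  have hvsum : v₁ + v₂ ≠ 0 := by simp [h₁]
  have hmeas : Measurable fun p : ℝ × ℝ => p.1 + p.2 := by fun_prop
  haveI := Measure.isProbabilityMeasure_map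
    (μ := (gaussianReal 0 v₁).prod (gaussianReal 0 v₂)) hmeas.aemeasurable
  refine Measure.ext_of_Iic _ _ fun t => ?_
  rw [Measure.map_apply hmeas measurableSet_Iic,
    Measure.prod_apply (hmeas measurableSet_Iic)]
  have hsec : ∀ x : ℝ, (Prod.mk x ⁻¹' ((fun p : ℝ × ℝ => p.1 + p.2) ⁻¹' Iic t))
      = Iic (t - x) := by
    intro x; ext y
    simp only [Set.mem_preimage, Set.mem_Iic]
    constructor <;> intro h <;> linarith
  have htrans : ∀ x : ℝ, gaussianReal 0 v₂ (Iic (t - x))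
      = ∫⁻ y in Iic t, gaussianPDF 0 v₂ (y - x) := by
    intro x
    rw [gaussianReal_apply _ h₂]
    have hmap : Measure.map (fun y : ℝ => y + -x) volume = volume :=
      map_add_right_eq_self volume (-x)
    conv_lhs => rw [← hmap]
    rw [setLIntegral_map measurableSet_Iic (measurable_gaussianPDF 0 v₂)
      (measurable_add_const (-x))]
    have hpre : (fun y : ℝ => y + -x) ⁻¹' Iic (t - x) = Iic t := by
      ext y; simp only [Set.mem_preimage, Set.mem_Iic]
      constructor <;> intro h <;> linarith
    rw [hpre]
    simp_rw [← sub_eq_add_neg]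
  simp_rw [hsec, htrans]
  have hG : Measurable fun x : ℝ => ∫⁻ y in Iic t, gaussianPDF 0 v₂ (y - x) :=
    Measurable.lintegral_prod_right' (f := fun p : ℝ × ℝ => gaussianPDF 0 v₂ (p.2 - p.1))
      ((measurable_gaussianPDF 0 v₂).comp (measurable_snd.sub measurable_fst))
  rw [gaussianReal_of_var_ne_zero 0 h₁,
    lintegral_withDensity_eq_lintegral_mul _ (measurable_gaussianPDF 0 v₁) hG]
  simp only [Pi.mul_apply]
  have hswap : ∫⁻ x, gaussianPDF 0 v₁ x * ∫⁻ y in Iic t, gaussianPDF 0 v₂ (y - x)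
      = ∫⁻ y in Iic t, ∫⁻ x, gaussianPDF 0 v₁ x * gaussianPDF 0 v₂ (y - x) := by
    have h1 : ∀ x : ℝ, gaussianPDF 0 v₁ x * ∫⁻ y in Iic t, gaussianPDF 0 v₂ (y - x)
        = ∫⁻ y in Iic t, gaussianPDF 0 v₁ x * gaussianPDF 0 v₂ (y - x) := fun x =>
      (lintegral_const_mul (gaussianPDF 0 v₁ x)
        ((measurable_gaussianPDF 0 v₂).comp ((measurable_id.sub (measurable_const (a := x)))))).symm
    rw [lintegral_congr h1]
    exact lintegral_lintegral_swap
      (((measurable_gaussianPDF 0 v₁).comp measurable_fst |>.mul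
        ((measurable_gaussianPDF 0 v₂).comp (measurable_snd.sub measurable_fst))).aemeasurable)
  rw [hswap]
  simp_rw [gaussianPDF_conv h₁ h₂]
  rw [← gaussianReal_apply 0 hvsum]

lemma gaussianReal_add_of_indepFun {Ω : Type*} [MeasureSpace Ω]
    [IsProbabilityMeasure (ℙ : Measure Ω)] {X Y : Ω → ℝ} {v₁ v₂ : NNReal}
    (hX : Measure.map X ℙ = gaussianReal 0 v₁) (hY : Measure.map Y ℙ = gaussianReal 0 v₂)
    (hind : IndepFun X Y ℙ) :
    Measure.map (fun ω => X ω + Y ω) ℙ = gaussianReal 0 (v₁ + v₂) := by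
  have hXm : AEMeasurable X ℙ := aemeasurable_of_map_neZero (by rw [hX]; infer_instance)
  have hYm : AEMeasurable Y ℙ := aemeasurable_of_map_neZero (by rw [hY]; infer_instance)
  have hp : Measure.map (fun ω => (X ω, Y ω)) ℙ
      = (gaussianReal 0 v₁).prod (gaussianReal 0 v₂) := by
    rw [← hX, ← hY]
    exact (ProbabilityTheory.indepFun_iff_map_prod_eq_prod_map_map hXm hYm).mp hind
  calc Measure.map (fun ω => X ω + Y ω) ℙ
      = Measure.map ((fun p : ℝ × ℝ => p.1 + p.2) ∘ fun ω => (X ω, Y ω)) ℙ := rfl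
    _ = Measure.map (fun p : ℝ × ℝ => p.1 + p.2)
          (Measure.map (fun ω => (X ω, Y ω)) ℙ) :=
        (AEMeasurable.map_map_of_aemeasurable (by fun_prop) (hXm.prodMk hYm)).symm
    _ = gaussianReal 0 (v₁ + v₂) := by rw [hp, gaussianReal_prod_add]

lemma gaussianReal_one_Ici (t : ℝ) :
    gaussianReal 0 1 (Ici t) = ENNReal.ofReal (Phi (-t)) := by
  have h1 : (⟨(-1 : ℝ) ^ 2, sq_nonneg _⟩ : NNReal) * 1 = 1 := by
    ext; norm_num
  have hneg : (gaussianReal 0 1).map (fun x : ℝ => -1 * x) = gaussianReal 0 1 := by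
    rw [gaussianReal_map_const_mul, mul_zero]; exact congrArg _ h1
  conv_lhs => rw [← hneg]
  rw [Measure.map_apply (by fun_prop) measurableSet_Ici]
  have hpre : (fun x : ℝ => -1 * x) ⁻¹' Ici t = Iic (-t) := by
    ext x
    simp only [Set.mem_preimage, Set.mem_Ici, Set.mem_Iic]
    constructor <;> intro h <;> linarith
  rw [hpre, ← ProbabilityTheory.ofReal_cdf _ (-t)]
  rfl

lemma gaussianReal_Ici (v : NNReal) (hv : v ≠ 0) (c : ℝ) :
    gaussianReal 0 v (Ici c) = ENNReal.ofReal (Phi (-(c / Real.sqrt v))) := by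
  have hvr : (0 : ℝ) < v := by positivity
  have hr : (0 : ℝ) < Real.sqrt v := Real.sqrt_pos.mpr hvr
  have h1 : (⟨(Real.sqrt v) ^ 2, sq_nonneg _⟩ : NNReal) * 1 = v := by
    ext
    push_cast
    rw [mul_one, Real.sq_sqrt hvr.le]
    rfl
  have hmap : (gaussianReal 0 1).map (fun x : ℝ => Real.sqrt v * x) = gaussianReal 0 v := by
    rw [gaussianReal_map_const_mul, mul_zero]; exact congrArg _ h1
  conv_lhs => rw [← hmap]
  rw [Measure.map_apply (by fun_prop) measurableSet_Ici]
  have hpre : (fun x : ℝ => Real.sqrt v * x) ⁻¹' Ici c = Ici (c / Real.sqrt v) := by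
    ext x
    simp only [Set.mem_preimage, Set.mem_Ici]
    rw [div_le_iff₀ hr, mul_comm]
  rw [hpre, gaussianReal_one_Ici]

/-- **High-level policy error probability in the 1-D toy environment.**
With `V̂(x, g) = -|x - g| (1 + σ z_{x,g})`, goal `g = s + T`, `T > 1`, subgoal step `k`
with `1 ≤ k ≤ T`, and independent standard Gaussian noise at the two candidate subgoals,
the probability that the high-level policy errs, `P[V̂(s+k, g) ≤ V̂(s-k, g)]`, equals
`Φ(-√2 / (σ √((T/k)² + 1)))`. -/
theorem high_level_policy_error {Ω : Type*} [MeasureSpace Ω]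
    [IsProbabilityMeasure (ℙ : Measure Ω)]
    (s T k σ : ℝ) (hT : 1 < T) (hk₁ : 1 ≤ k) (hk₂ : k ≤ T) (hσ : 0 < σ)
    (z : ℝ → ℝ → Ω → ℝ) (Vhat : ℝ → ℝ → Ω → ℝ)
    (hV : ∀ x g ω, Vhat x g ω = -|x - g| * (1 + σ * z x g ω))
    (hz₁ : Measure.map (z (s + k) (s + T)) ℙ = gaussianReal 0 1)
    (hz₂ : Measure.map (z (s - k) (s + T)) ℙ = gaussianReal 0 1)
    (hind : IndepFun (z (s + k) (s + T)) (z (s - k) (s + T)) ℙ) :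
    ℙ {ω | Vhat (s + k) (s + T) ω ≤ Vhat (s - k) (s + T) ω} =
      ENNReal.ofReal (Phi (-(Real.sqrt 2) / (σ * Real.sqrt ((T / k) ^ 2 + 1)))) := by
  have hk0 : (0 : ℝ) < k := lt_of_lt_of_le zero_lt_one hk₁
  set z₁ := z (s + k) (s + T) with hz1def
  set z₂ := z (s - k) (s + T) with hz2def
  have hm₁ : AEMeasurable z₁ ℙ := aemeasurable_of_map_neZero (by rw [hz₁]; infer_instance)
  have hm₂ : AEMeasurable z₂ ℙ := aemeasurable_of_map_neZero (by rw [hz₂]; infer_instance)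
  have e₁ : |s + k - (s + T)| = T - k := by
    rw [show s + k - (s + T) = -(T - k) by ring, abs_neg, abs_of_nonneg (by linarith)]
  have e₂ : |s - k - (s + T)| = T + k := by
    rw [show s - k - (s + T) = -(T + k) by ring, abs_neg, abs_of_nonneg (by linarith)]
  have hset : {ω | Vhat (s + k) (s + T) ω ≤ Vhat (s - k) (s + T) ω}
      = (fun ω => (T - k) * z₁ ω + (-(T + k)) * z₂ ω) ⁻¹' (Ici (2 * k / σ)) := by
    ext ω
    simp only [Set.mem_setOf_eq, Set.mem_preimage, Set.mem_Ici, hV, e₁, e₂]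
    rw [div_le_iff₀ hσ]
    constructor <;> intro h <;> nlinarith [h]
  have law₁ : Measure.map (fun ω => (T - k) * z₁ ω) ℙ
      = gaussianReal 0 ⟨(T - k) ^ 2, sq_nonneg _⟩ := by
    have h := (AEMeasurable.map_map_of_aemeasurable
      (measurable_const_mul (T - k)).aemeasurable hm₁).symm
    rw [Function.comp_def] at h
    rw [h, hz₁, gaussianReal_map_const_mul, mul_zero, mul_one]; rfl
  have law₂ : Measure.map (fun ω => (-(T + k)) * z₂ ω) ℙ
      = gaussianReal 0 ⟨(-(T + k)) ^ 2, sq_nonneg _⟩ := by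
    have h := (AEMeasurable.map_map_of_aemeasurable
      (measurable_const_mul (-(T + k))).aemeasurable hm₂).symm
    rw [Function.comp_def] at h
    rw [h, hz₂, gaussianReal_map_const_mul, mul_zero, mul_one]; rfl
  have hindc : IndepFun (fun ω => (T - k) * z₁ ω) (fun ω => (-(T + k)) * z₂ ω) ℙ :=
    hind.comp (measurable_const_mul (T - k)) (measurable_const_mul (-(T + k)))
  have lawW := gaussianReal_add_of_indepFun law₁ law₂ hindc
  have hWm : AEMeasurable (fun ω => (T - k) * z₁ ω + (-(T + k)) * z₂ ω) ℙ :=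
    (hm₁.const_mul _).add (hm₂.const_mul _)
  have hvne : ((⟨(T - k) ^ 2, sq_nonneg _⟩ + ⟨(-(T + k)) ^ 2, sq_nonneg _⟩ : NNReal)) ≠ 0 := by
    refine NNReal.coe_ne_zero.mp ?_
    change (T - k) ^ 2 + (-(T + k)) ^ 2 ≠ 0
    nlinarith [sq_nonneg (T - k), sq_nonneg (T + k - 2)]
  rw [hset, ← Measure.map_apply_of_aemeasurable hWm measurableSet_Ici, lawW,
    gaussianReal_Ici _ hvne]
  congr 1
  have hco : ((⟨(T - k) ^ 2, sq_nonneg _⟩ + ⟨(-(T + k)) ^ 2, sq_nonneg _⟩ : NNReal) : ℝ)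
      = 2 * (T ^ 2 + k ^ 2) := by change (T - k) ^ 2 + (-(T + k)) ^ 2 = _; ring
  rw [hco]
  have hs2 : Real.sqrt (2 * (T ^ 2 + k ^ 2))
      = Real.sqrt 2 * Real.sqrt (T ^ 2 + k ^ 2) := Real.sqrt_mul (by norm_num) _
  have hs3 : Real.sqrt ((T / k) ^ 2 + 1) = Real.sqrt (T ^ 2 + k ^ 2) / k := by
    rw [show (T / k) ^ 2 + 1 = (T ^ 2 + k ^ 2) / k ^ 2 by field_simp,
      Real.sqrt_div (by positivity), Real.sqrt_sq hk0.le]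
  rw [hs2, hs3]
  have hS : 0 < Real.sqrt (T ^ 2 + k ^ 2) := Real.sqrt_pos.mpr (by positivity)
  have h2 : Real.sqrt 2 * Real.sqrt 2 = 2 := Real.mul_self_sqrt (by norm_num)
  have hs2pos : (0 : ℝ) < Real.sqrt 2 := Real.sqrt_pos.mpr (by norm_num)
  congr 1
  field_simp
  ring_nf
  rw [Real.sq_sqrt (by norm_num : (0:ℝ) ≤ 2)]
end

section
/- Under the same 1-D noisy-value model, the probability that the low-level policy errs when reaching a subgoal k steps away, P[\hat{V}(s+1, s+k) \le \hat{V}(s-1, s+k)], equals \Phi(-\sqrt{2}/(\sigma\sqrt{k^2+1})). -/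
open MeasureTheory ProbabilityTheory

open Set
open scoped ENNReal

noncomputable def rotL (a b r : ℝ) : ℝ × ℝ →ₗ[ℝ] ℝ × ℝ where
  toFun p := ((a * p.1 + b * p.2) / r, (-b * p.1 + a * p.2) / r)
  map_add' p q := by simp [Prod.ext_iff]; constructor <;> ring
  map_smul' c p := by simp [Prod.ext_iff, smul_eq_mul]; constructor <;> ring

lemma prodGauss_eq : (gaussianReal 0 1).prod (gaussianReal 0 1)
    = (volume : Measure (ℝ × ℝ)).withDensity
        (fun p => gaussianPDF 0 1 p.1 * gaussianPDF 0 1 p.2) := by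
  have hg : Measurable (gaussianPDF 0 1) := measurable_gaussianPDF 0 1
  refine Measure.prod_eq (μ := gaussianReal 0 1) (ν := gaussianReal 0 1) fun s t hs ht => ?_
  rw [withDensity_apply _ (hs.prod ht)]
  rw [show (volume : Measure (ℝ × ℝ)) = (volume : Measure ℝ).prod volume from rfl]
  rw [← Measure.prod_restrict]
  rw [lintegral_prod_mul hg.aemeasurable hg.aemeasurable]
  rw [gaussianReal_of_var_ne_zero 0 one_ne_zero, withDensity_apply _ hs, withDensity_apply _ ht]

lemma pdf_prod_sq (x y : ℝ) : gaussianPDF 0 1 x * gaussianPDF 0 1 y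
    = ENNReal.ofReal ((Real.sqrt (2 * Real.pi))⁻¹ * Real.exp (-x ^ 2 / 2)
        * ((Real.sqrt (2 * Real.pi))⁻¹ * Real.exp (-y ^ 2 / 2))) := by
  simp only [gaussianPDF_def, gaussianPDFReal_def]
  rw [← ENNReal.ofReal_mul (by positivity)]
  norm_num

lemma gauss_halfplane (a b t : ℝ) (hab : 0 < a ^ 2 + b ^ 2) :
    ((gaussianReal 0 1).prod (gaussianReal 0 1)) {p : ℝ × ℝ | a * p.1 + b * p.2 ≤ t}
      = gaussianReal 0 1 (Iic (t / Real.sqrt (a ^ 2 + b ^ 2))) := by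
  set r := Real.sqrt (a ^ 2 + b ^ 2) with hr
  have hrpos : 0 < r := Real.sqrt_pos.mpr hab
  have hr2 : r ^ 2 = a ^ 2 + b ^ 2 := Real.sq_sqrt hab.le
  set L := rotL a b r with hL
  have hdet : LinearMap.det L = 1 := by
    rw [hL, ← LinearMap.det_toMatrix (Module.Basis.finTwoProd ℝ), Matrix.det_fin_two]
    simp only [LinearMap.toMatrix_apply, rotL, Module.Basis.finTwoProd_zero, Module.Basis.finTwoProd_one,
      Module.Basis.coe_finTwoProd_repr, Matrix.cons_val_zero, Matrix.cons_val_one, LinearMap.coe_mk, AddHom.coe_mk]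
    field_simp
    nlinarith [hr2]
  have hvol : Measure.map L (volume : Measure (ℝ × ℝ)) = volume := by
    rw [Measure.map_linearMap_addHaar_eq_smul_addHaar _ (by rw [hdet]; norm_num)]
    simp [hdet]
  have hLmeas : Measurable L := L.continuous_of_finiteDimensional.measurable
  set f : ℝ × ℝ → ℝ≥0∞ := fun p => gaussianPDF 0 1 p.1 * gaussianPDF 0 1 p.2 with hf
  have hfmeas : Measurable f :=
    ((measurable_gaussianPDF 0 1).comp measurable_fst).mul
      ((measurable_gaussianPDF 0 1).comp measurable_snd)
  have hinv : ∀ p : ℝ × ℝ, f (L p) = f p := by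
    intro p
    have h1 : (L p).1 = (a * p.1 + b * p.2) / r := rfl
    have h2 : (L p).2 = (-b * p.1 + a * p.2) / r := rfl
    have hsq : (L p).1 ^ 2 + (L p).2 ^ 2 = p.1 ^ 2 + p.2 ^ 2 := by
      rw [h1, h2, div_pow, div_pow, ← add_div]
      rw [div_eq_iff (by positivity)]
      nlinarith [hr2]
    rw [hf]
    simp only
    rw [pdf_prod_sq, pdf_prod_sq]
    congr 1
    have key : ∀ u v : ℝ, (Real.sqrt (2 * Real.pi))⁻¹ * Real.exp (-u ^ 2 / 2)
        * ((Real.sqrt (2 * Real.pi))⁻¹ * Real.exp (-v ^ 2 / 2))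
        = (Real.sqrt (2 * Real.pi))⁻¹ * (Real.sqrt (2 * Real.pi))⁻¹
          * Real.exp (-(u ^ 2 + v ^ 2) / 2) := by
      intro u v
      rw [mul_mul_mul_comm, ← Real.exp_add]
      congr 1
      ring
    rw [key, key, hsq]
  have hset : {p : ℝ × ℝ | a * p.1 + b * p.2 ≤ t}
      = L ⁻¹' (Iic (t / r) ×ˢ (univ : Set ℝ)) := by
    ext p
    simp only [mem_setOf_eq, mem_preimage, mem_prod, mem_Iic, mem_univ, and_true]
    rw [show (L p).1 = (a * p.1 + b * p.2) / r from rfl]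
    exact (div_le_div_iff_of_pos_right hrpos).symm
  have hSmeas : MeasurableSet (Iic (t / r) ×ˢ (univ : Set ℝ)) :=
    measurableSet_Iic.prod MeasurableSet.univ
  rw [prodGauss_eq, hset, withDensity_apply _ (hLmeas hSmeas)]
  calc ∫⁻ p in L ⁻¹' (Iic (t / r) ×ˢ univ), f p ∂volume
      = ∫⁻ p in L ⁻¹' (Iic (t / r) ×ˢ univ), f (L p) ∂volume := by
        exact lintegral_congr fun p => (hinv p).symm
    _ = ∫⁻ p in Iic (t / r) ×ˢ univ, f p ∂(Measure.map L volume) :=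
        (setLIntegral_map hSmeas hfmeas hLmeas).symm
    _ = ((volume : Measure (ℝ × ℝ)).withDensity f) (Iic (t / r) ×ˢ univ) := by
        rw [hvol, withDensity_apply _ hSmeas]
    _ = gaussianReal 0 1 (Iic (t / r)) := by
        rw [← prodGauss_eq, Measure.prod_prod, measure_univ, mul_one]

/-- **Low-level policy error probability in the 1-D toy environment.**
With `V̂(x, g) = -|x - g| (1 + σ z_{x,g})`, subgoal `s + k` with `k > 1`, and independent
standard Gaussian noise at the two queried states, the probability that the low-level
policy errs, `P[V̂(s+1, s+k) ≤ V̂(s-1, s+k)]`, equals `Φ(-√2 / (σ √(k² + 1)))`. -/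
theorem low_level_policy_error {Ω : Type*} [MeasureSpace Ω]
    [IsProbabilityMeasure (ℙ : Measure Ω)]
    (s k σ : ℝ) (hk : 1 < k) (hσ : 0 < σ)
    (z : ℝ → ℝ → Ω → ℝ) (Vhat : ℝ → ℝ → Ω → ℝ)
    (hV : ∀ x g ω, Vhat x g ω = -|x - g| * (1 + σ * z x g ω))
    (hz₁ : Measure.map (z (s + 1) (s + k)) ℙ = gaussianReal 0 1)
    (hz₂ : Measure.map (z (s - 1) (s + k)) ℙ = gaussianReal 0 1)
    (hind : IndepFun (z (s + 1) (s + k)) (z (s - 1) (s + k)) ℙ) :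
    ℙ {ω | Vhat (s + 1) (s + k) ω ≤ Vhat (s - 1) (s + k) ω} =
      ENNReal.ofReal (Phi (-(Real.sqrt 2) / (σ * Real.sqrt (k ^ 2 + 1)))) := by
  set z₁ := z (s + 1) (s + k) with hz1def
  set z₂ := z (s - 1) (s + k) with hz2def
  have hz₁m : AEMeasurable z₁ ℙ := by
    by_contra h
    rw [Measure.map_of_not_aemeasurable h] at hz₁
    exact (IsProbabilityMeasure.ne_zero (gaussianReal 0 1)) hz₁.symm
  have hz₂m : AEMeasurable z₂ ℙ := by
    by_contra h
    rw [Measure.map_of_not_aemeasurable h] at hz₂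
    exact (IsProbabilityMeasure.ne_zero (gaussianReal 0 1)) hz₂.symm
  have hpair : Measure.map (fun ω => (z₁ ω, z₂ ω)) ℙ
      = (gaussianReal 0 1).prod (gaussianReal 0 1) := by
    rw [(indepFun_iff_map_prod_eq_prod_map_map hz₁m hz₂m).mp hind, hz₁, hz₂]
  set a : ℝ := -(k - 1) with hadef
  set b : ℝ := k + 1 with hbdef
  set t : ℝ := -2 / σ with htdef
  have hA : MeasurableSet {p : ℝ × ℝ | a * p.1 + b * p.2 ≤ t} :=
    measurableSet_le (by fun_prop) measurable_const
  have hset : {ω | Vhat (s + 1) (s + k) ω ≤ Vhat (s - 1) (s + k) ω}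
      = (fun ω => (z₁ ω, z₂ ω)) ⁻¹' {p : ℝ × ℝ | a * p.1 + b * p.2 ≤ t} := by
    ext ω
    simp only [mem_setOf_eq, mem_preimage]
    rw [hV, hV]
    have e1 : |s + 1 - (s + k)| = k - 1 := by
      rw [abs_of_nonpos (by linarith)]; ring
    have e2 : |s - 1 - (s + k)| = k + 1 := by
      rw [abs_of_nonpos (by linarith)]; ring
    rw [e1, e2, htdef, le_div_iff₀ hσ, ← hz1def, ← hz2def, hadef, hbdef]
    constructor <;> intro h <;> nlinarith [h, hσ]
  have hab : 0 < a ^ 2 + b ^ 2 := by nlinarith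
  rw [hset, ← Measure.map_apply_of_aemeasurable (hz₁m.prodMk hz₂m) hA, hpair,
    gauss_halfplane a b t hab]
  have harg : t / Real.sqrt (a ^ 2 + b ^ 2)
      = -(Real.sqrt 2) / (σ * Real.sqrt (k ^ 2 + 1)) := by
    have h2 : Real.sqrt 2 * Real.sqrt 2 = 2 := Real.mul_self_sqrt (by norm_num)
    have hs1 : (0:ℝ) < Real.sqrt (k ^ 2 + 1) := by positivity
    have hs2 : (0:ℝ) < Real.sqrt 2 := by positivity
    have hab2 : a ^ 2 + b ^ 2 = 2 * (k ^ 2 + 1) := by rw [hadef, hbdef]; ring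
    rw [hab2, Real.sqrt_mul (by norm_num : (0:ℝ) ≤ 2), htdef]
    field_simp
    linear_combination (1 : ℝ) * (Real.sq_sqrt (by norm_num : (0:ℝ) ≤ 2))
  rw [harg, Phi, ofReal_cdf]
end

section
/- In the 1-D noisy-value environment with goal distance T > 1 and subgoal step k (1 \le k \le T, T/k an integer), the probability that the hierarchical policy \pi^\ell \circ \pi^h selects an incorrect action is at most \Phi(-\sqrt{2}/(\sigma\sqrt{(T/k)^2+1})) + \Phi(-\sqrt{2}/(\sigma\sqrt{k^2+1})), where \Phi is the standard normal CDF. -/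
open MeasureTheory ProbabilityTheory

open Real Set NNReal

namespace HPBAux

lemma exp_combine (a : ℝ) {b : ℝ} (hb : 0 < b) (t x : ℝ) :
    gaussianPDFReal 0 1 x * gaussianPDFReal (a * x) ⟨b ^ 2, sq_nonneg b⟩ t
      = ((Real.sqrt (2 * π))⁻¹ * (Real.sqrt (2 * π * b ^ 2))⁻¹
          * Real.exp (-t ^ 2 / (2 * (a ^ 2 + b ^ 2))))
        * Real.exp (-((a ^ 2 + b ^ 2) / (2 * b ^ 2))
            * (x - a * t / (a ^ 2 + b ^ 2)) ^ 2) := by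
  have hs : (0:ℝ) < a ^ 2 + b ^ 2 := by positivity
  simp only [gaussianPDFReal, NNReal.coe_mk, NNReal.coe_one, mul_one, sub_zero]
  rw [mul_mul_mul_comm]
  have hexp : Real.exp (-x ^ 2 / 2) * Real.exp (-(t - a * x) ^ 2 / (2 * b ^ 2))
      = Real.exp (-t ^ 2 / (2 * (a ^ 2 + b ^ 2)))
        * Real.exp (-((a ^ 2 + b ^ 2) / (2 * b ^ 2))
            * (x - a * t / (a ^ 2 + b ^ 2)) ^ 2) := by
    rw [← Real.exp_add, ← Real.exp_add]
    congr 1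
    field_simp
    ring
  change (Real.sqrt (2 * π))⁻¹ * (Real.sqrt (2 * π * b ^ 2))⁻¹ * (Real.exp (-x ^ 2 / 2) * Real.exp (-(t - a * x) ^ 2 / (2 * b ^ 2))) = _
  rw [hexp]
  ring

lemma gauss_conv (a : ℝ) {b : ℝ} (hb : 0 < b) (t : ℝ) :
    ∫ x : ℝ, gaussianPDFReal 0 1 x * gaussianPDFReal (a * x) ⟨b ^ 2, sq_nonneg b⟩ t
      = gaussianPDFReal 0 ⟨a ^ 2 + b ^ 2, by positivity⟩ t := by
  have hs : (0:ℝ) < a ^ 2 + b ^ 2 := by positivity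
  have hp : (0:ℝ) < (a ^ 2 + b ^ 2) / (2 * b ^ 2) := by positivity
  simp_rw [exp_combine a hb t _]
  rw [MeasureTheory.integral_const_mul]
  have hshift : ∫ x : ℝ, Real.exp (-((a ^ 2 + b ^ 2) / (2 * b ^ 2))
        * (x - a * t / (a ^ 2 + b ^ 2)) ^ 2)
      = Real.sqrt (π / ((a ^ 2 + b ^ 2) / (2 * b ^ 2))) := by
    rw [integral_sub_right_eq_self
      (fun x => Real.exp (-((a ^ 2 + b ^ 2) / (2 * b ^ 2)) * x ^ 2))
      (a * t / (a ^ 2 + b ^ 2))]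
    exact integral_gaussian _
  rw [hshift]
  have h1 : π / ((a ^ 2 + b ^ 2) / (2 * b ^ 2)) = (2 * π * b ^ 2) / (a ^ 2 + b ^ 2) := by
    field_simp
  rw [h1, Real.sqrt_div (by positivity)]
  simp only [gaussianPDFReal, NNReal.coe_mk, sub_zero]
  have h2 : Real.sqrt (2 * π * (a ^ 2 + b ^ 2))
      = Real.sqrt (2 * π) * Real.sqrt (a ^ 2 + b ^ 2) := Real.sqrt_mul (by positivity) _
  have h3 : Real.sqrt (2 * π) ≠ 0 := by positivity
  have h4 : Real.sqrt (2 * π * b ^ 2) ≠ 0 := by positivity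
  have h5 : Real.sqrt (a ^ 2 + b ^ 2) ≠ 0 := by positivity
  change _ = (Real.sqrt (2 * π * (a ^ 2 + b ^ 2)))⁻¹ * Real.exp (-t ^ 2 / (2 * (a ^ 2 + b ^ 2)))
  rw [h2]
  field_simp

lemma gauss_lconv (a : ℝ) {b : ℝ} (hb : 0 < b) (t : ℝ) :
    ∫⁻ x : ℝ, gaussianPDF 0 1 x * gaussianPDF (a * x) ⟨b ^ 2, sq_nonneg b⟩ t
      = gaussianPDF 0 ⟨a ^ 2 + b ^ 2, by positivity⟩ t := by
  have hp : (0:ℝ) < (a ^ 2 + b ^ 2) / (2 * b ^ 2) := by positivity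
  have hint : Integrable (fun x : ℝ =>
      gaussianPDFReal 0 1 x * gaussianPDFReal (a * x) ⟨b ^ 2, sq_nonneg b⟩ t) := by
    have heq : (fun x : ℝ =>
        gaussianPDFReal 0 1 x * gaussianPDFReal (a * x) ⟨b ^ 2, sq_nonneg b⟩ t)
        = fun x : ℝ => ((Real.sqrt (2 * π))⁻¹ * (Real.sqrt (2 * π * b ^ 2))⁻¹
          * Real.exp (-t ^ 2 / (2 * (a ^ 2 + b ^ 2))))
        * Real.exp (-((a ^ 2 + b ^ 2) / (2 * b ^ 2))
            * (x - a * t / (a ^ 2 + b ^ 2)) ^ 2) := funext (exp_combine a hb t)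
    rw [heq]
    exact (Integrable.comp_sub_right (integrable_exp_neg_mul_sq hp) _).const_mul _
  simp only [gaussianPDF]
  simp_rw [← ENNReal.ofReal_mul (gaussianPDFReal_nonneg 0 1 _)]
  rw [← ofReal_integral_eq_lintegral_ofReal hint
    (ae_of_all _ fun x => mul_nonneg (gaussianPDFReal_nonneg _ _ _) (gaussianPDFReal_nonneg _ _ _))]
  rw [gauss_conv a hb t]

lemma gauss_symm (u : ℝ) :
    gaussianReal 0 1 (Ici u) = gaussianReal 0 1 (Iic (-u)) := by
  have hmap : (gaussianReal 0 1).map (fun y : ℝ => (-1) * y) = gaussianReal 0 1 := by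
    rw [gaussianReal_map_const_mul (-1 : ℝ)]
    have hvar : NNReal.mk ((-1:ℝ) ^ 2) (sq_nonneg _) * 1 = 1 := by
      rw [← NNReal.coe_inj]; push_cast; norm_num
    rw [hvar]
    norm_num
  have : gaussianReal 0 1 (Ici u) = ((gaussianReal 0 1).map (fun y : ℝ => (-1) * y)) (Ici u) := by
    rw [hmap]
  rw [this, Measure.map_apply (measurable_const_mul _) measurableSet_Ici]
  congr 1
  ext y
  simp only [mem_preimage, mem_Ici, mem_Iic, neg_one_mul, le_neg]

lemma gauss_prod (a : ℝ) {b : ℝ} (hb : 0 < b) (c : ℝ) :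
    ((gaussianReal 0 1).prod (gaussianReal 0 1)) {p : ℝ × ℝ | c ≤ a * p.1 - b * p.2}
      = ENNReal.ofReal (Phi (-c / Real.sqrt (a ^ 2 + b ^ 2))) := by
  have hs : (0:ℝ) < a ^ 2 + b ^ 2 := by positivity
  set vb : ℝ≥0 := ⟨b ^ 2, sq_nonneg b⟩ with hvb_def
  set vs : ℝ≥0 := (⟨a ^ 2 + b ^ 2, hs.le⟩ : ℝ≥0) with hvs_def
  have hvb : vb ≠ 0 := by
    intro h
    have := congrArg NNReal.toReal h
    simp only [hvb_def, NNReal.coe_mk, NNReal.coe_zero] at this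
    exact (by positivity : (0:ℝ) < b ^ 2).ne' this
  have hvs : vs ≠ 0 := by
    intro h
    have := congrArg NNReal.toReal h
    simp only [hvs_def, NNReal.coe_mk, NNReal.coe_zero] at this
    exact hs.ne' this
  have hS : MeasurableSet {p : ℝ × ℝ | c ≤ a * p.1 - b * p.2} :=
    measurableSet_le measurable_const (by fun_prop)
  rw [Measure.prod_apply hS]
  -- sections
  have hsec : ∀ x : ℝ, (gaussianReal 0 1) (Prod.mk x ⁻¹' {p : ℝ × ℝ | c ≤ a * p.1 - b * p.2})
      = gaussianReal (a * x) vb (Ici c) := by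
    intro x
    have hmap : (gaussianReal 0 1).map (fun y : ℝ => a * x - b * y) = gaussianReal (a * x) vb := by
      have h1 : (fun y : ℝ => a * x - b * y) = (fun z : ℝ => z + a * x) ∘ (fun y : ℝ => (-b) * y) := by
        funext y; simp [Function.comp]; ring
      rw [h1, ← Measure.map_map (measurable_add_const _) (measurable_const_mul _),
        gaussianReal_map_const_mul (-b), gaussianReal_map_add_const]
      have hvar : NNReal.mk ((-b) ^ 2) (sq_nonneg _) * 1 = vb := by
        rw [← NNReal.coe_inj]; push_cast; simp [hvb_def]; rfl
      rw [hvar]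
      norm_num
    have hpre : Prod.mk x ⁻¹' {p : ℝ × ℝ | c ≤ a * p.1 - b * p.2}
        = (fun y : ℝ => a * x - b * y) ⁻¹' (Ici c) := rfl
    rw [hpre, ← Measure.map_apply (by fun_prop) measurableSet_Ici, hmap]
  rw [lintegral_congr hsec]
  -- expand the inner measure and the outer gaussian measure
  have hexpand : ∀ x : ℝ, gaussianReal (a * x) vb (Ici c)
      = ∫⁻ t in Ici c, gaussianPDF (a * x) vb t := fun x => gaussianReal_apply _ hvb _
  rw [lintegral_congr hexpand, gaussianReal_of_var_ne_zero 0 one_ne_zero]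
  have hmeas2 : Measurable fun p : ℝ × ℝ => gaussianPDF (a * p.1) vb p.2 := by
    simp only [gaussianPDF, gaussianPDFReal]
    exact (by fun_prop : Measurable fun p : ℝ × ℝ =>
      (Real.sqrt (2 * π * vb))⁻¹ * Real.exp (-(p.2 - a * p.1) ^ 2 / (2 * vb))).ennreal_ofReal
  rw [lintegral_withDensity_eq_lintegral_mul _ (measurable_gaussianPDF 0 1)
    (Measurable.lintegral_prod_right (f := fun x t => gaussianPDF (a * x) vb t) hmeas2)]
  simp only [Pi.mul_apply]
  have hpull : ∀ x : ℝ, gaussianPDF 0 1 x * ∫⁻ t in Ici c, gaussianPDF (a * x) vb t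
      = ∫⁻ t in Ici c, gaussianPDF 0 1 x * gaussianPDF (a * x) vb t := by
    intro x
    rw [lintegral_const_mul _ (measurable_gaussianPDF _ _)]
  rw [lintegral_congr hpull]
  rw [lintegral_lintegral_swap ((((measurable_gaussianPDF 0 1).comp measurable_fst).mul
    hmeas2).aemeasurable)]
  have hinner : ∀ t : ℝ, ∫⁻ x : ℝ, gaussianPDF 0 1 x * gaussianPDF (a * x) vb t
      = gaussianPDF 0 vs t := fun t => gauss_lconv a hb t
  rw [lintegral_congr hinner, ← gaussianReal_apply 0 hvs (Ici c)]
  -- identify with the standard gaussian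
  set s := Real.sqrt (a ^ 2 + b ^ 2) with hsdef
  have hspos : 0 < s := Real.sqrt_pos.mpr hs
  have hmap : (gaussianReal 0 1).map (fun y : ℝ => s * y) = gaussianReal 0 vs := by
    rw [gaussianReal_map_const_mul s]
    have hvar : NNReal.mk (s ^ 2) (sq_nonneg _) * 1 = vs := by
      rw [← NNReal.coe_inj]; push_cast
      simp [hvs_def, hsdef, Real.sq_sqrt hs.le]; rfl
    rw [hvar]
    norm_num
  rw [← hmap, Measure.map_apply (measurable_const_mul _) measurableSet_Ici]
  have hpre2 : (fun y : ℝ => s * y) ⁻¹' (Ici c) = Ici (c / s) := by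
    ext y
    simp only [mem_preimage, mem_Ici]
    rw [div_le_iff₀ hspos, mul_comm]
  rw [hpre2, gauss_symm, ← neg_div]
  rw [Phi, ProbabilityTheory.ofReal_cdf]

lemma prob_key {Ω : Type*} [MeasureSpace Ω] [IsProbabilityMeasure (ℙ : Measure Ω)]
    (a : ℝ) {b : ℝ} (hb : 0 < b) (c : ℝ) (X Y : Ω → ℝ)
    (hX : Measure.map X ℙ = gaussianReal 0 1) (hY : Measure.map Y ℙ = gaussianReal 0 1)
    (hind : IndepFun X Y ℙ) :
    ℙ {ω | c ≤ a * X ω - b * Y ω} = ENNReal.ofReal (Phi (-c / Real.sqrt (a ^ 2 + b ^ 2))) := by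
  have hXm : AEMeasurable X ℙ := by
    by_contra h
    exact (IsProbabilityMeasure.ne_zero (gaussianReal 0 1))
      ((Measure.map_of_not_aemeasurable h) ▸ hX).symm
  have hYm : AEMeasurable Y ℙ := by
    by_contra h
    exact (IsProbabilityMeasure.ne_zero (gaussianReal 0 1))
      ((Measure.map_of_not_aemeasurable h) ▸ hY).symm
  have hmap : Measure.map (fun ω => (X ω, Y ω)) ℙ = (gaussianReal 0 1).prod (gaussianReal 0 1) := by
    exact ((indepFun_iff_map_prod_eq_prod_map_map hXm hYm).mp hind).trans (by rw [hX, hY])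
  have hS : MeasurableSet {p : ℝ × ℝ | c ≤ a * p.1 - b * p.2} :=
    measurableSet_le measurable_const (by fun_prop)
  have hset : {ω | c ≤ a * X ω - b * Y ω}
      = (fun ω => (X ω, Y ω)) ⁻¹' {p : ℝ × ℝ | c ≤ a * p.1 - b * p.2} := rfl
  rw [hset, ← Measure.map_apply_of_aemeasurable (hXm.prodMk hYm) hS, hmap]
  exact gauss_prod a hb c

end HPBAux

/-- **Hierarchical policy error bound (Proposition 1 of HIQL).**
In the 1-D noisy-value environment with `V̂(x, g) = -|x - g| (1 + σ z_{x,g})`,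
goal distance `T > 1` and subgoal step `k` with `1 ≤ k ≤ T` and `T/k` an integer,
if the hierarchical policy `π^ℓ ∘ π^h` errs only when the high-level policy errs
(`V̂(s+k, s+T) ≤ V̂(s-k, s+T)`) or the low-level policy errs
(`V̂(s+1, s+k) ≤ V̂(s-1, s+k)`), then its error probability is at most
`Φ(-√2/(σ√((T/k)² + 1))) + Φ(-√2/(σ√(k² + 1)))`. -/
theorem hierarchical_policy_error_bound {Ω : Type*} [MeasureSpace Ω]
    [IsProbabilityMeasure (ℙ : Measure Ω)]
    (s T k σ : ℝ) (hT : 1 < T) (hk₁ : 1 ≤ k) (hk₂ : k ≤ T) (hσ : 0 < σ)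
    (hdiv : ∃ n : ℕ, T / k = n)
    (z : ℝ → ℝ → Ω → ℝ) (Vhat : ℝ → ℝ → Ω → ℝ)
    (hV : ∀ x g ω, Vhat x g ω = -|x - g| * (1 + σ * z x g ω))
    (hz : ∀ x g, Measure.map (z x g) ℙ = gaussianReal 0 1)
    (hind_h : IndepFun (z (s + k) (s + T)) (z (s - k) (s + T)) ℙ)
    (hind_l : IndepFun (z (s + 1) (s + k)) (z (s - 1) (s + k)) ℙ)
    (E : Set Ω)
    (hE : E ⊆ {ω | Vhat (s + k) (s + T) ω ≤ Vhat (s - k) (s + T) ω} ∪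
            {ω | Vhat (s + 1) (s + k) ω ≤ Vhat (s - 1) (s + k) ω}) :
    ℙ E ≤ ENNReal.ofReal (Phi (-(Real.sqrt 2) / (σ * Real.sqrt ((T / k) ^ 2 + 1)))) +
          ENNReal.ofReal (Phi (-(Real.sqrt 2) / (σ * Real.sqrt (k ^ 2 + 1)))) := by
  have hk0 : 0 < k := lt_of_lt_of_le zero_lt_one hk₁
  have hT0 : 0 < T := lt_trans zero_lt_one hT
  -- rewrite the two events
  have habs1 : |s + k - (s + T)| = T - k := by
    rw [show s + k - (s + T) = -(T - k) by ring, abs_neg, abs_of_nonneg (by linarith)]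
  have habs2 : |s - k - (s + T)| = T + k := by
    rw [show s - k - (s + T) = -(T + k) by ring, abs_neg, abs_of_nonneg (by linarith)]
  have habs3 : |s + 1 - (s + k)| = k - 1 := by
    rw [show s + 1 - (s + k) = -(k - 1) by ring, abs_neg, abs_of_nonneg (by linarith)]
  have habs4 : |s - 1 - (s + k)| = k + 1 := by
    rw [show s - 1 - (s + k) = -(k + 1) by ring, abs_neg, abs_of_nonneg (by linarith)]
  have hAset : {ω | Vhat (s + k) (s + T) ω ≤ Vhat (s - k) (s + T) ω}
      = {ω | 2 * k ≤ (σ * (T - k)) * z (s + k) (s + T) ω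
          - (σ * (T + k)) * z (s - k) (s + T) ω} := by
    ext ω
    simp only [Set.mem_setOf_eq, hV, habs1, habs2]
    set u := z (s + k) (s + T) ω
    set v := z (s - k) (s + T) ω
    have hring : -(T + k) * (1 + σ * v) - (-(T - k) * (1 + σ * u))
        = (σ * (T - k)) * u - (σ * (T + k)) * v - 2 * k := by ring
    rw [← sub_nonneg, hring]
    exact sub_nonneg
  have hBset : {ω | Vhat (s + 1) (s + k) ω ≤ Vhat (s - 1) (s + k) ω}
      = {ω | 2 * 1 ≤ (σ * (k - 1)) * z (s + 1) (s + k) ω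
          - (σ * (k + 1)) * z (s - 1) (s + k) ω} := by
    ext ω
    simp only [Set.mem_setOf_eq, hV, habs3, habs4]
    set u := z (s + 1) (s + k) ω
    set v := z (s - 1) (s + k) ω
    have hring : -(k + 1) * (1 + σ * v) - (-(k - 1) * (1 + σ * u))
        = (σ * (k - 1)) * u - (σ * (k + 1)) * v - 2 * 1 := by ring
    rw [← sub_nonneg, hring]
    exact sub_nonneg
  have hbpos1 : 0 < σ * (T + k) := by positivity
  have hbpos2 : 0 < σ * (k + 1) := by positivity
  have hPA := HPBAux.prob_key (σ * (T - k)) hbpos1 (2 * k) _ _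
    (hz (s + k) (s + T)) (hz (s - k) (s + T)) hind_h
  have hPB := HPBAux.prob_key (σ * (k - 1)) hbpos2 (2 * 1) _ _
    (hz (s + 1) (s + k)) (hz (s - 1) (s + k)) hind_l
  -- arithmetic identifications of the two Phi arguments
  have hsqrtTk : Real.sqrt ((σ * (T - k)) ^ 2 + (σ * (T + k)) ^ 2)
      = σ * Real.sqrt 2 * Real.sqrt (T ^ 2 + k ^ 2) := by
    rw [show (σ * (T - k)) ^ 2 + (σ * (T + k)) ^ 2 = (σ ^ 2 * 2) * (T ^ 2 + k ^ 2) by ring,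
      Real.sqrt_mul (by positivity), Real.sqrt_mul (sq_nonneg σ), Real.sqrt_sq hσ.le]
  have hsqrtk1 : Real.sqrt ((σ * (k - 1)) ^ 2 + (σ * (k + 1)) ^ 2)
      = σ * Real.sqrt 2 * Real.sqrt (k ^ 2 + 1) := by
    rw [show (σ * (k - 1)) ^ 2 + (σ * (k + 1)) ^ 2 = (σ ^ 2 * 2) * (k ^ 2 + 1) by ring,
      Real.sqrt_mul (by positivity), Real.sqrt_mul (sq_nonneg σ), Real.sqrt_sq hσ.le]
  have hTk : Real.sqrt ((T / k) ^ 2 + 1) = Real.sqrt (T ^ 2 + k ^ 2) / k := by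
    rw [show (T / k) ^ 2 + 1 = (T ^ 2 + k ^ 2) / k ^ 2 by field_simp,
      Real.sqrt_div (by positivity), Real.sqrt_sq hk0.le]
  have hs2 : Real.sqrt 2 ≠ 0 := by positivity
  have hsTk : Real.sqrt (T ^ 2 + k ^ 2) ≠ 0 := by positivity
  have hsk1 : Real.sqrt (k ^ 2 + 1) ≠ 0 := by positivity
  have harg1 : -(2 * k) / Real.sqrt ((σ * (T - k)) ^ 2 + (σ * (T + k)) ^ 2)
      = -(Real.sqrt 2) / (σ * Real.sqrt ((T / k) ^ 2 + 1)) := by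
    have h22 : Real.sqrt 2 * Real.sqrt 2 = 2 := Real.mul_self_sqrt (by norm_num)
    rw [hsqrtTk, hTk]
    rw [div_eq_div_iff (by positivity) (by positivity)]
    field_simp
    linear_combination h22
  have harg2 : -(2 * 1) / Real.sqrt ((σ * (k - 1)) ^ 2 + (σ * (k + 1)) ^ 2)
      = -(Real.sqrt 2) / (σ * Real.sqrt (k ^ 2 + 1)) := by
    have h22 : Real.sqrt 2 * Real.sqrt 2 = 2 := Real.mul_self_sqrt (by norm_num)
    rw [hsqrtk1]
    rw [div_eq_div_iff (by positivity) (by positivity)]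
    linear_combination (σ * Real.sqrt (k ^ 2 + 1)) * h22
  calc ℙ E ≤ ℙ ({ω | Vhat (s + k) (s + T) ω ≤ Vhat (s - k) (s + T) ω} ∪
            {ω | Vhat (s + 1) (s + k) ω ≤ Vhat (s - 1) (s + k) ω}) := measure_mono hE
    _ ≤ ℙ {ω | Vhat (s + k) (s + T) ω ≤ Vhat (s - k) (s + T) ω}
        + ℙ {ω | Vhat (s + 1) (s + k) ω ≤ Vhat (s - 1) (s + k) ω} := measure_union_le _ _
    _ = ENNReal.ofReal (Phi (-(Real.sqrt 2) / (σ * Real.sqrt ((T / k) ^ 2 + 1)))) +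
          ENNReal.ofReal (Phi (-(Real.sqrt 2) / (σ * Real.sqrt (k ^ 2 + 1)))) := by
        rw [hAset, hBset, hPA, hPB, harg1, harg2]
end
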